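/- (Value relation) val(G^B) = val(S^B) + c_Bᵀ A_B⁻¹ b, where S^B is the shortest 0-to-Sb path problem on the group graph with weights c̄_N. If additionally B is an optimal basis of the LP relaxation, then val(G^B) = val(S^B) + val(LP). -/

import Mathlib

namespace InverseGCR16

variable {m n q : ℕ}

def ABR (A : Matrix (Fin m) (Fin n) ℤ) (β : Fin m → Fin n) : Matrix (Fin m) (Fin m) ℝ :=
  (A.map (Int.cast : ℤ → ℝ)).submatrix id β

/-- Reduced cost `c̄_j = c_j − c_Bᵀ A_B⁻¹ A_j`. -/
noncomputable def redCost (A : Matrix (Fin m) (Fin n) ℤ) (c : Fin n → ℝ)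
    (β : Fin m → Fin n) (j : Fin n) : ℝ :=
  c j - dotProduct (Matrix.vecMul (fun i => c (β i)) (ABR A β)⁻¹)
    (fun i => (A i j : ℝ))

/-- Optimal value (infimum in `EReal`) of the GCR `G^B`. -/
noncomputable def valG (A : Matrix (Fin m) (Fin n) ℤ) (b : Fin m → ℤ) (c : Fin n → ℝ)
    (β : Fin m → Fin n) : EReal :=
  sInf {v : EReal | ∃ x : Fin n → ℤ,
    (A.mulVec x = b ∧ ∀ i ∉ Finset.image β Finset.univ, 0 ≤ x i) ∧
    v = ((∑ i, c i * (x i : ℝ) : ℝ) : EReal)}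

/-- Optimal value (infimum in `EReal`) of the LP relaxation. -/
noncomputable def valLP (A : Matrix (Fin m) (Fin n) ℤ) (b : Fin m → ℤ)
    (c : Fin n → ℝ) : EReal :=
  sInf {v : EReal | ∃ x : Fin n → ℝ,
    ((A.map (Int.cast : ℤ → ℝ)).mulVec x = (fun i => (b i : ℝ)) ∧ ∀ i, 0 ≤ x i) ∧
    v = ((∑ i, c i * x i : ℝ) : EReal)}

/-- Optimal value (infimum in `EReal`) of the shortest `0`-to-`Sb` path problem `S^B`
on the group graph, paths encoded by the number of arcs traversed from each class. -/
noncomputable def valS (A : Matrix (Fin m) (Fin n) ℤ) (c : Fin n → ℝ)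
    (β : Fin m → Fin n) (η : Fin q → Fin n) (w : Fin m → ℕ)
    (g : Fin q → ∀ i, ZMod (w i)) (tgt : ∀ i, ZMod (w i)) : EReal :=
  sInf {v : EReal | ∃ p : Fin q → ℕ, (∑ j, p j • g j) = tgt ∧
    v = ((∑ j, redCost A c β (η j) * (p j : ℝ) : ℝ) : EReal)}

variable {m n q : ℕ}

lemma ereal_add_cancel (r : ℝ) (x : EReal) : (x + (r:ℝ)) + ((-r : ℝ) : EReal) = x := by
  induction x using EReal.rec with
  | bot => simp
  | coe a => norm_cast; ring
  | top => simp [EReal.top_add_coe]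

noncomputable def shiftIso (r : ℝ) : EReal ≃o EReal where
  toFun x := x + (r:ℝ)
  invFun x := x + ((-r:ℝ):EReal)
  left_inv x := ereal_add_cancel r x
  right_inv x := by simpa using ereal_add_cancel (-r) x
  map_rel_iff' := by
    intro x y
    constructor
    · intro h
      have h2 := add_le_add_left h (((-r:ℝ)):EReal)
      simp only [Equiv.coe_fn_mk] at h2
      rw [ereal_add_cancel r x, ereal_add_cancel r y] at h2
      exact h2
    · intro h; exact add_le_add_left h _

lemma sInf_add_coe (s : Set EReal) (r : ℝ) :
    sInf ((fun v : EReal => v + (r:ℝ)) '' s) = sInf s + (r:ℝ) := by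
  calc sInf ((fun v : EReal => v + (r:ℝ)) '' s) = ⨅ a ∈ s, a + ((r:ℝ):EReal) := sInf_image
    _ = sInf s + (r:ℝ) := ((shiftIso r).map_sInf s).symm

lemma image_eta (β : Fin m → Fin n) (η : Fin q → Fin n)
    (hcompl : Set.range η = (Set.range β)ᶜ) :
    Finset.image η Finset.univ = (Finset.image β Finset.univ)ᶜ := by
  apply Finset.coe_injective
  simp [Finset.coe_compl, Set.image_univ, hcompl]

lemma sum_split {M : Type*} [AddCommMonoid M] (β : Fin m → Fin n) (η : Fin q → Fin n)
    (hβ : Function.Injective β) (hη : Function.Injective η)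
    (hcompl : Set.range η = (Set.range β)ᶜ) (f : Fin n → M) :
    ∑ i, f i = (∑ k, f (β k)) + ∑ j, f (η j) := by
  rw [← Finset.sum_add_sum_compl (Finset.image β Finset.univ) f,
      ← image_eta β η hcompl,
      Finset.sum_image (fun a _ b _ h => hβ h),
      Finset.sum_image (fun a _ b _ h => hη h)]

lemma eta_not_mem (β : Fin m → Fin n) (η : Fin q → Fin n)
    (hcompl : Set.range η = (Set.range β)ᶜ) (j : Fin q) :
    η j ∉ Finset.image β Finset.univ := by
  have : η j ∈ (Set.range β)ᶜ := hcompl ▸ Set.mem_range_self j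
  simp only [Finset.mem_image, Finset.mem_univ, true_and]
  rintro ⟨a, ha⟩
  exact this ⟨a, ha⟩

variable {m n q : ℕ}

lemma redCost_basis (A : Matrix (Fin m) (Fin n) ℤ) (c : Fin n → ℝ) (β : Fin m → Fin n)
    (hAB : IsUnit (ABR A β).det) (k : Fin m) : redCost A c β (β k) = 0 := by
  have h : Matrix.vecMul (Matrix.vecMul (fun i => c (β i)) (ABR A β)⁻¹) (ABR A β)
      = fun i => c (β i) := by
    rw [Matrix.vecMul_vecMul, Matrix.nonsing_inv_mul _ hAB, Matrix.vecMul_one]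
  have h2 := congrFun h k
  have h3 : dotProduct (Matrix.vecMul (fun i => c (β i)) (ABR A β)⁻¹)
      (fun i => (A i (β k) : ℝ))
      = Matrix.vecMul (Matrix.vecMul (fun i => c (β i)) (ABR A β)⁻¹) (ABR A β) k := by
    simp [Matrix.vecMul, dotProduct, ABR]
  simp [redCost, h3, h2]



lemma obj_decomp (A : Matrix (Fin m) (Fin n) ℤ) (b : Fin m → ℤ) (c : Fin n → ℝ)
    (β : Fin m → Fin n) (η : Fin q → Fin n)
    (hβ : Function.Injective β) (hη : Function.Injective η)
    (hcompl : Set.range η = (Set.range β)ᶜ)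
    (hAB : IsUnit (ABR A β).det) (x : Fin n → ℝ)
    (hx : (A.map (Int.cast : ℤ → ℝ)).mulVec x = fun i => (b i : ℝ)) :
    ∑ i, c i * x i =
      dotProduct (Matrix.vecMul (fun i => c (β i)) (ABR A β)⁻¹)
        (fun i => (b i : ℝ)) + ∑ j, redCost A c β (η j) * x (η j) := by
  set y := Matrix.vecMul (fun i => c (β i)) (ABR A β)⁻¹ with hy
  have key : ∀ i, c i * x i = redCost A c β i * x i + ∑ k, y k * ((A k i : ℝ) * x i) := by
    intro i
    have hr : redCost A c β i = c i - ∑ k, y k * (A k i : ℝ) := by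
      simp [redCost, dotProduct, hy]
    rw [hr, sub_mul, Finset.sum_mul]
    simp only [mul_assoc]
    ring
  calc ∑ i, c i * x i
      = (∑ i, redCost A c β i * x i) + ∑ i, ∑ k, y k * ((A k i : ℝ) * x i) := by
        rw [← Finset.sum_add_distrib]; exact Finset.sum_congr rfl (fun i _ => key i)
    _ = dotProduct y (fun i => (b i : ℝ)) + ∑ j, redCost A c β (η j) * x (η j) := by
        have h1 : (∑ i, redCost A c β i * x i) = ∑ j, redCost A c β (η j) * x (η j) := by
          rw [sum_split β η hβ hη hcompl (fun i => redCost A c β i * x i)]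
          simp [redCost_basis A c β hAB]
        have h2 : (∑ i, ∑ k, y k * ((A k i : ℝ) * x i))
            = dotProduct y (fun i => (b i : ℝ)) := by
          rw [Finset.sum_comm]
          have hk : ∀ k, ∑ i, y k * ((A k i : ℝ) * x i) = y k * (b k : ℝ) := by
            intro k
            rw [← Finset.mul_sum]
            congr 1
            have := congrFun hx k
            simpa [Matrix.mulVec, dotProduct, Matrix.map_apply] using this
          simp only [hk, dotProduct]
        rw [h1, h2, add_comm]


lemma key_exists (A : Matrix (Fin m) (Fin n) ℤ) (b : Fin m → ℤ)
    (β : Fin m → Fin n) (η : Fin q → Fin n)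
    (S T : Matrix (Fin m) (Fin m) ℤ)
    (hSdet : IsUnit S.det) (hTdet : IsUnit T.det)
    (w : Fin m → ℕ)
    (hSNF : S * A.submatrix id β * T = Matrix.diagonal (fun i => (w i : ℤ)))
    (z : Fin q → ℤ) :
    (∃ xB : Fin m → ℤ,
      (A.submatrix id β).mulVec xB + (A.submatrix id η).mulVec z = b) ↔
    ∀ i, (((S * A.submatrix id η).mulVec z i : ℤ) : ZMod (w i))
        = ((S.mulVec b i : ℤ) : ZMod (w i)) := by
  have hSAB : S * A.submatrix id β = Matrix.diagonal (fun i => (w i : ℤ)) * T⁻¹ := by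
    have h := congrArg (fun M => M * T⁻¹) hSNF
    simpa [Matrix.mul_assoc, Matrix.mul_nonsing_inv _ hTdet] using h
  constructor
  · rintro ⟨xB, hxB⟩ i
    have h1 : S.mulVec b
        = (S * A.submatrix id β).mulVec xB + (S * A.submatrix id η).mulVec z := by
      rw [← hxB, Matrix.mulVec_add, Matrix.mulVec_mulVec, Matrix.mulVec_mulVec]
    have h2 : (S * A.submatrix id β).mulVec xB i
        = (w i : ℤ) * (T⁻¹.mulVec xB) i := by
      rw [hSAB, ← Matrix.mulVec_mulVec, Matrix.mulVec_diagonal]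
    have h3 : S.mulVec b i - (S * A.submatrix id η).mulVec z i
        = (w i : ℤ) * (T⁻¹.mulVec xB) i := by
      rw [congrFun h1 i]; simp [h2]
    rw [← sub_eq_zero, ← Int.cast_sub, ZMod.intCast_zmod_eq_zero_iff_dvd]
    exact ⟨-(T⁻¹.mulVec xB i), by linarith [h3]⟩
  · intro hz
    set d : Fin m → ℤ := fun i => S.mulVec b i - (S * A.submatrix id η).mulVec z i with hd
    have hdvd : ∀ i, (w i : ℤ) ∣ d i := by
      intro i
      rw [← ZMod.intCast_zmod_eq_zero_iff_dvd]
      simp [hd, Int.cast_sub, hz i]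
    set u : Fin m → ℤ := fun i => d i / (w i : ℤ) with hu
    have huw : ∀ i, (w i : ℤ) * u i = d i := fun i => Int.mul_ediv_cancel' (hdvd i)
    refine ⟨T.mulVec u, ?_⟩
    have hSinj : ∀ v v' : Fin m → ℤ, S.mulVec v = S.mulVec v' → v = v' := by
      intro v v' h
      have h2 := congrArg (fun t => S⁻¹.mulVec t) h
      simpa [Matrix.mulVec_mulVec, Matrix.nonsing_inv_mul _ hSdet,
        Matrix.one_mulVec] using h2
    apply hSinj
    have h4 : S.mulVec ((A.submatrix id β).mulVec (T.mulVec u))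
        = fun i => d i := by
      funext i
      rw [Matrix.mulVec_mulVec, Matrix.mulVec_mulVec, hSNF,
        Matrix.mulVec_diagonal]
      exact huw i
    rw [Matrix.mulVec_add, h4]
    funext i
    simp [hd, Matrix.mulVec_mulVec]


lemma group_sum (A : Matrix (Fin m) (Fin n) ℤ) (η : Fin q → Fin n)
    (S : Matrix (Fin m) (Fin m) ℤ) (w : Fin m → ℕ)
    (p : Fin q → ℕ) (i : Fin m) :
    (∑ j, p j • (fun i' => (((S * A.submatrix id η) i' j : ℤ) : ZMod (w i')))) i
      = (((S * A.submatrix id η).mulVec (fun j => (p j : ℤ)) i : ℤ) : ZMod (w i)) := by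
  simp only [Finset.sum_apply, Pi.smul_apply, Matrix.mulVec, dotProduct]
  push_cast
  refine Finset.sum_congr rfl fun j _ => ?_
  rw [nsmul_eq_mul, mul_comm]


lemma cast_constraint (A : Matrix (Fin m) (Fin n) ℤ) (b : Fin m → ℤ)
    (x : Fin n → ℤ) (hx : A.mulVec x = b) :
    (A.map (Int.cast : ℤ → ℝ)).mulVec (fun i => (x i : ℝ)) = fun i => (b i : ℝ) := by
  funext i
  have h := congrFun hx i
  simp only [Matrix.mulVec, dotProduct, Matrix.map_apply] at h ⊢
  rw [← h]
  push_cast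
  rfl

lemma mulVec_split (A : Matrix (Fin m) (Fin n) ℤ) (β : Fin m → Fin n) (η : Fin q → Fin n)
    (hβ : Function.Injective β) (hη : Function.Injective η)
    (hcompl : Set.range η = (Set.range β)ᶜ) (x : Fin n → ℤ) :
    A.mulVec x = (A.submatrix id β).mulVec (fun k => x (β k))
      + (A.submatrix id η).mulVec (fun j => x (η j)) := by
  funext i
  simp only [Matrix.mulVec, dotProduct, Matrix.submatrix_apply, id_eq, Pi.add_apply]
  exact sum_split β η hβ hη hcompl (fun t => A i t * x t)


theorem main_part1
    (A : Matrix (Fin m) (Fin n) ℤ) (b : Fin m → ℤ) (c : Fin n → ℝ)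
    (β : Fin m → Fin n) (η : Fin q → Fin n)
    (hβ : Function.Injective β) (hη : Function.Injective η)
    (hcompl : Set.range η = (Set.range β)ᶜ)
    (S T : Matrix (Fin m) (Fin m) ℤ)
    (hS : S.det = 1 ∨ S.det = -1) (hT : T.det = 1 ∨ T.det = -1)
    (w : Fin m → ℕ)
    (hSNF : S * A.submatrix id β * T = Matrix.diagonal (fun i => (w i : ℤ)))
    (hAB : IsUnit (ABR A β).det)
    (g : Fin q → ∀ i, ZMod (w i))
    (hg : g = fun j i => (((S * A.submatrix id η) i j : ℤ) : ZMod (w i)))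
    (tgt : ∀ i, ZMod (w i)) (htgt : tgt = fun i => ((S.mulVec b i : ℤ) : ZMod (w i))) :
    valG A b c β = valS A c β η w g tgt +
      ((dotProduct (Matrix.vecMul (fun i => c (β i)) (ABR A β)⁻¹)
        (fun i => (b i : ℝ)) : ℝ) : EReal) := by
  have hSdet : IsUnit S.det := by rcases hS with h | h <;> simp [Int.isUnit_iff, h]
  have hTdet : IsUnit T.det := by rcases hT with h | h <;> simp [Int.isUnit_iff, h]
  set cst : ℝ := dotProduct (Matrix.vecMul (fun i => c (β i)) (ABR A β)⁻¹)
    (fun i => (b i : ℝ)) with hcst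
  have hset : {v : EReal | ∃ x : Fin n → ℤ,
      (A.mulVec x = b ∧ ∀ i ∉ Finset.image β Finset.univ, 0 ≤ x i) ∧
      v = ((∑ i, c i * (x i : ℝ) : ℝ) : EReal)}
      = (fun v : EReal => v + (cst : ℝ)) ''
        {v : EReal | ∃ p : Fin q → ℕ, (∑ j, p j • g j) = tgt ∧
          v = ((∑ j, redCost A c β (η j) * (p j : ℝ) : ℝ) : EReal)} := by
    ext v
    simp only [Set.mem_setOf_eq, Set.mem_image]
    constructor
    · rintro ⟨x, ⟨hx1, hx2⟩, rfl⟩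
      set p : Fin q → ℕ := fun j => (x (η j)).toNat with hp
      have hpx : ∀ j, (p j : ℤ) = x (η j) :=
        fun j => Int.toNat_of_nonneg (hx2 _ (eta_not_mem β η hcompl j))
      have hfeas : (A.submatrix id β).mulVec (fun k => x (β k))
          + (A.submatrix id η).mulVec (fun j => (p j : ℤ)) = b := by
        rw [show (fun j => (p j : ℤ)) = (fun j => x (η j)) from funext hpx]
        rw [← mulVec_split A β η hβ hη hcompl x, hx1]
      have hz := (key_exists A b β η S T hSdet hTdet w hSNF (fun j => (p j : ℤ))).mp
        ⟨_, hfeas⟩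
      refine ⟨((∑ j, redCost A c β (η j) * (p j : ℝ) : ℝ) : EReal), ⟨p, ?_, rfl⟩, ?_⟩
      · rw [hg, htgt]
        funext i
        rw [group_sum A η S w p i]
        exact hz i
      · rw [← EReal.coe_add, EReal.coe_eq_coe_iff]
        have hobj := obj_decomp A b c β η hβ hη hcompl hAB (fun i => (x i : ℝ))
          (cast_constraint A b x hx1)
        rw [show (fun j : Fin q => redCost A c β (η j) * (p j : ℝ))
            = fun j => redCost A c β (η j) * ((x (η j) : ℝ)) from
          funext fun j => by rw [show ((p j : ℝ)) = ((x (η j) : ℝ)) by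
            rw [← hpx j]; push_cast; rfl]]
        rw [hobj]
        ring
    · rintro ⟨v', ⟨p, hp, rfl⟩, rfl⟩
      rw [hg, htgt] at hp
      have hz : ∀ i, (((S * A.submatrix id η).mulVec (fun j => (p j : ℤ)) i : ℤ)
          : ZMod (w i)) = ((S.mulVec b i : ℤ) : ZMod (w i)) := by
        intro i
        rw [← group_sum A η S w p i]
        exact congrFun hp i
      obtain ⟨xB, hxB⟩ := (key_exists A b β η S T hSdet hTdet w hSNF
        (fun j => (p j : ℤ))).mpr hz
      set x : Fin n → ℤ := Function.extend β xB (Function.extend η (fun j => (p j : ℤ)) 0)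
        with hxdef
      have hxβ : ∀ k, x (β k) = xB k := fun k => hβ.extend_apply _ _ k
      have hxη : ∀ j, x (η j) = (p j : ℤ) := by
        intro j
        have hnot : ¬∃ a, β a = η j := by
          rintro ⟨a, ha⟩
          exact eta_not_mem β η hcompl j (Finset.mem_image.mpr ⟨a, Finset.mem_univ a, ha⟩)
        rw [hxdef, Function.extend_apply' _ _ _ hnot, hη.extend_apply]
      have hAx : A.mulVec x = b := by
        rw [mulVec_split A β η hβ hη hcompl x,
          show (fun k => x (β k)) = xB from funext hxβ,
          show (fun j => x (η j)) = (fun j => (p j : ℤ)) from funext hxη]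
        exact hxB
      refine ⟨x, ⟨hAx, ?_⟩, ?_⟩
      · intro i hi
        obtain ⟨j, hj⟩ : ∃ j, η j = i := by
          have hiβ : i ∈ (Set.range β)ᶜ := by
            intro hmem
            obtain ⟨a, ha⟩ := hmem
            exact hi (Finset.mem_image.mpr ⟨a, Finset.mem_univ a, ha⟩)
          rw [← hcompl] at hiβ
          exact hiβ
        rw [← hj, hxη]
        exact Int.natCast_nonneg _
      · rw [← EReal.coe_add, EReal.coe_eq_coe_iff]
        have hobj := obj_decomp A b c β η hβ hη hcompl hAB (fun i => (x i : ℝ))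
          (cast_constraint A b x hAx)
        rw [hobj, show (fun j : Fin q => redCost A c β (η j) * (p j : ℝ))
            = fun j => redCost A c β (η j) * ((x (η j) : ℝ)) from
          funext fun j => by rw [hxη j]; push_cast; rfl]
        ring
  rw [valG, valS, hset, sInf_add_coe]


theorem lp_eq (A : Matrix (Fin m) (Fin n) ℤ) (b : Fin m → ℤ) (c : Fin n → ℝ)
    (β : Fin m → Fin n) (η : Fin q → Fin n)
    (hβ : Function.Injective β) (hη : Function.Injective η)
    (hcompl : Set.range η = (Set.range β)ᶜ)
    (hAB : IsUnit (ABR A β).det)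
    (hfeasbasis : ∀ i, 0 ≤ ((ABR A β)⁻¹.mulVec (fun i => (b i : ℝ))) i)
    (hred : ∀ j, 0 ≤ redCost A c β j) :
    valLP A b c = ((dotProduct (Matrix.vecMul (fun i => c (β i)) (ABR A β)⁻¹)
        (fun i => (b i : ℝ)) : ℝ) : EReal) := by
  set xB : Fin m → ℝ := (ABR A β)⁻¹.mulVec (fun i => (b i : ℝ)) with hxB
  set xs : Fin n → ℝ := Function.extend β xB 0 with hxs
  have hxsβ : ∀ k, xs (β k) = xB k := fun k => hβ.extend_apply _ _ k
  have hxsη : ∀ j, xs (η j) = 0 := by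
    intro j
    have hnot : ¬∃ a, β a = η j := by
      rintro ⟨a, ha⟩
      exact eta_not_mem β η hcompl j (Finset.mem_image.mpr ⟨a, Finset.mem_univ a, ha⟩)
    rw [hxs, Function.extend_apply' _ _ _ hnot]
    rfl
  set cst : ℝ := dotProduct (Matrix.vecMul (fun i => c (β i)) (ABR A β)⁻¹)
    (fun i => (b i : ℝ)) with hcst
  have hconstr : (A.map (Int.cast : ℤ → ℝ)).mulVec xs = fun i => (b i : ℝ) := by
    funext i
    have hsplit := sum_split β η hβ hη hcompl (fun t => ((A i t : ℝ)) * xs t)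
    simp only [Matrix.mulVec, dotProduct, Matrix.map_apply]
    rw [hsplit]
    have h2 : ∑ j, (A i (η j) : ℝ) * xs (η j) = 0 := by
      simp [hxsη]
    have h1 : ∑ k, (A i (β k) : ℝ) * xs (β k) = (b i : ℝ) := by
      have := congrFun (congrArg (fun M => M.mulVec (fun i => (b i : ℝ)))
        (Matrix.mul_nonsing_inv _ hAB)) i
      simp only [Matrix.one_mulVec] at this
      rw [← this, ← Matrix.mulVec_mulVec]
      simp only [Matrix.mulVec, dotProduct, ABR, Matrix.submatrix_apply,
        Matrix.map_apply, id_eq]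
      refine Finset.sum_congr rfl fun k _ => ?_
      rw [hxsβ k]
      simp only [hxB, Matrix.mulVec, dotProduct, ABR]
    rw [h1, h2, add_zero]
  have hval : ∑ i, c i * xs i = cst := by
    rw [sum_split β η hβ hη hcompl (fun t => c t * xs t)]
    have h2 : ∑ j, c (η j) * xs (η j) = 0 := by simp [hxsη]
    have h1 : ∑ k, c (β k) * xs (β k) = cst := by
      rw [hcst, ← Matrix.dotProduct_mulVec]
      simp only [dotProduct, ← hxB]
      exact Finset.sum_congr rfl fun k _ => by rw [hxsβ k]
    rw [h1, h2, add_zero]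
  apply le_antisymm
  · apply sInf_le
    refine ⟨xs, ⟨hconstr, ?_⟩, ?_⟩
    · intro i
      by_cases h : ∃ k, β k = i
      · obtain ⟨k, rfl⟩ := h
        rw [hxsβ]
        exact hfeasbasis k
      · rw [hxs, Function.extend_apply' _ _ _ h]
        simp
    · rw [hval]
  · apply le_sInf
    rintro v ⟨x, ⟨hx1, hx2⟩, rfl⟩
    rw [EReal.coe_le_coe_iff, obj_decomp A b c β η hβ hη hcompl hAB x hx1]
    have hnn : 0 ≤ ∑ j, redCost A c β (η j) * x (η j) :=
      Finset.sum_nonneg fun j _ => mul_nonneg (hred _) (hx2 _)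
    linarith


/-- `val(G^B) = val(S^B) + c_Bᵀ A_B⁻¹ b`; and if moreover `B` is an
optimal basis of the LP relaxation (nonnegative reduced costs, so that
`val(LP) = c_Bᵀ A_B⁻¹ b`), then `val(G^B) = val(S^B) + val(LP)`. -/
theorem valG_eq_valS_add_const
    (A : Matrix (Fin m) (Fin n) ℤ) (b : Fin m → ℤ) (c : Fin n → ℝ)
    (β : Fin m → Fin n) (η : Fin q → Fin n)
    (hβ : Function.Injective β) (hη : Function.Injective η)
    (hcompl : Set.range η = (Set.range β)ᶜ)
    (S T : Matrix (Fin m) (Fin m) ℤ)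
    (hS : S.det = 1 ∨ S.det = -1) (hT : T.det = 1 ∨ T.det = -1)
    (w : Fin m → ℕ) (hw : ∀ i, 0 < w i)
    (hSNF : S * A.submatrix id β * T = Matrix.diagonal (fun i => (w i : ℤ)))
    (hAB : IsUnit (ABR A β).det)
    (hfeasbasis : ∀ i, 0 ≤ ((ABR A β)⁻¹.mulVec (fun i => (b i : ℝ))) i)
    (g : Fin q → ∀ i, ZMod (w i))
    (hg : g = fun j i => (((S * A.submatrix id η) i j : ℤ) : ZMod (w i)))
    (tgt : ∀ i, ZMod (w i)) (htgt : tgt = fun i => ((S.mulVec b i : ℤ) : ZMod (w i))) :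
    valG A b c β = valS A c β η w g tgt +
      ((dotProduct (Matrix.vecMul (fun i => c (β i)) (ABR A β)⁻¹)
        (fun i => (b i : ℝ)) : ℝ) : EReal) ∧
    ((∀ j, 0 ≤ redCost A c β j) →
      valG A b c β = valS A c β η w g tgt + valLP A b c) := by
  have h1 := main_part1 A b c β η hβ hη hcompl S T hS hT w hSNF hAB g hg tgt htgt
  refine ⟨h1, fun hred => ?_⟩
  rw [h1, lp_eq A b c β η hβ hη hcompl hAB hfeasbasis hred]

end InverseGCR16
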